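/- Fix ξ ∈ R, constants c₂, c₄ ∈ R, and set λ = c₂ + c₄. Then the pair (ρ, A) with ρ ≡ ρ₀ constant and A(t,x,y,z) = A(ξ(x−λt), e₁) solves the SOHB system ∂ₜρ + c₁∇ₓ·(ρ A e₁) = 0 and (∂ₜ + c₂(Ae₁)·∇ₓ)A + [(Ae₁)×(c₃∇ₓ log ρ + c₄ r) + c₄ δ (Ae₁)]ₓ A = 0, with r and δ as defined from the frame columns of A. -/

import Mathlib

open Matrix Real

noncomputable section

/-- The antisymmetric cross-product matrix `[w]ₓ` of a vector `w ∈ ℝ³`. -/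
def crossMat (w : Fin 3 → ℝ) : Matrix (Fin 3) (Fin 3) ℝ :=
  !![0, -w 2, w 1; w 2, 0, -w 0; -w 1, w 0, 0]

/-- Rodrigues' formula: `A(θ,n) = I + sin θ [n]ₓ + (1 - cos θ) [n]ₓ²`. -/
def rodrigues (θ : ℝ) (n : Fin 3 → ℝ) : Matrix (Fin 3) (Fin 3) ℝ :=
  1 + Real.sin θ • crossMat n + (1 - Real.cos θ) • (crossMat n * crossMat n)

/-- Partial derivative `∂ⱼ f` of a scalar field on `ℝ³`. -/
def pd (j : Fin 3) (f : (Fin 3 → ℝ) → ℝ) (x : Fin 3 → ℝ) : ℝ :=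
  fderiv ℝ f x (Pi.single j 1)

/-- The cross product of two vectors in `ℝ³`. -/
def crossVec (a b : Fin 3 → ℝ) : Fin 3 → ℝ :=
  ![a 1 * b 2 - a 2 * b 1, a 2 * b 0 - a 0 * b 2, a 0 * b 1 - a 1 * b 0]

/-- Column `k` of a time-dependent matrix field (`k = 0,1,2` give `Ω, u, v`). -/
def col (A : ℝ → (Fin 3 → ℝ) → Matrix (Fin 3) (Fin 3) ℝ) (k : Fin 3)
    (t : ℝ) (x : Fin 3 → ℝ) : Fin 3 → ℝ :=
  fun i => A t x i k

/-- The divergence of a time-dependent vector field on `ℝ³`. -/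
def divg (B : ℝ → (Fin 3 → ℝ) → Fin 3 → ℝ) (t : ℝ) (x : Fin 3 → ℝ) : ℝ :=
  ∑ j, pd j (fun y => B t y j) x

/-- The directional derivative `(B·∇)C` of time-dependent vector fields. -/
def dirD (B C : ℝ → (Fin 3 → ℝ) → Fin 3 → ℝ) (t : ℝ) (x : Fin 3 → ℝ) :
    Fin 3 → ℝ :=
  fun i => ∑ j, B t x j * pd j (fun y => C t y i) x

/-- The vector `r = (∇·Ω)Ω + (∇·u)u + (∇·v)v` built from the columns of `A`. -/
def rvec (A : ℝ → (Fin 3 → ℝ) → Matrix (Fin 3) (Fin 3) ℝ) (t : ℝ)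
    (x : Fin 3 → ℝ) : Fin 3 → ℝ :=
  fun i => divg (col A 0) t x * col A 0 t x i + divg (col A 1) t x * col A 1 t x i
    + divg (col A 2) t x * col A 2 t x i

/-- The scalar `δ = [(Ω·∇)u]·v + [(u·∇)v]·Ω + [(v·∇)Ω]·u`. -/
def deltaS (A : ℝ → (Fin 3 → ℝ) → Matrix (Fin 3) (Fin 3) ℝ) (t : ℝ)
    (x : Fin 3 → ℝ) : ℝ :=
  (∑ i, dirD (_root_.col A 0) (_root_.col A 1) t x i * _root_.col A 2 t x i)
    + (∑ i, dirD (_root_.col A 1) (_root_.col A 2) t x i * _root_.col A 0 t x i)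
    + (∑ i, dirD (_root_.col A 2) (_root_.col A 0) t x i * _root_.col A 1 t x i)

/-- The instantaneous rotation vector
`w = Ω × (c₃ ∇ log ρ + c₄ r) + c₄ δ Ω` of the SOHB system. -/
def wvec (c₃ c₄ : ℝ) (ρ : ℝ → (Fin 3 → ℝ) → ℝ)
    (A : ℝ → (Fin 3 → ℝ) → Matrix (Fin 3) (Fin 3) ℝ) (t : ℝ)
    (x : Fin 3 → ℝ) : Fin 3 → ℝ :=
  fun i =>
    crossVec (col A 0 t x)
      (fun j => c₃ * pd j (fun y => Real.log (ρ t y)) x + c₄ * rvec A t x j) i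
    + c₄ * deltaS A t x * col A 0 t x i

/-- `(ρ, A)` solves the SOHB system. -/
def SolvesSOHB (c₁ c₂ c₃ c₄ : ℝ) (ρ : ℝ → (Fin 3 → ℝ) → ℝ)
    (A : ℝ → (Fin 3 → ℝ) → Matrix (Fin 3) (Fin 3) ℝ) : Prop :=
  (∀ t x, deriv (fun s => ρ s x) t
      + c₁ * ∑ j, pd j (fun y => ρ t y * A t y j 0) x = 0) ∧
  (∀ t x i j, deriv (fun s => A s x i j) t
      + c₂ * (∑ k, A t x k 0 * pd k (fun y => A t y i j) x)
      + (crossMat (wvec c₃ c₄ ρ A t x) * A t x) i j = 0)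


/-! ### Auxiliary lemmas for the helical wave solution -/

/-- The explicit rotation matrix about `e₁`. -/
def Mmat (θ : ℝ) : Matrix (Fin 3) (Fin 3) ℝ :=
  !![1, 0, 0; 0, Real.cos θ, -Real.sin θ; 0, Real.sin θ, Real.cos θ]

lemma rod_eq (θ : ℝ) : rodrigues θ ![1, 0, 0] = Mmat θ := by
  ext i j
  fin_cases i <;> fin_cases j <;>
    simp [rodrigues, Mmat, crossMat, Matrix.mul_apply, Fin.sum_univ_three,
      Matrix.one_apply, Matrix.vecHead, Matrix.vecTail]

lemma pd_const (c : ℝ) (j : Fin 3) (x : Fin 3 → ℝ) : pd j (fun _ => c) x = 0 := by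
  simp [pd]

lemma pd_comp01 (h : ℝ → ℝ) (d : ℝ) (x : Fin 3 → ℝ) (hd : HasDerivAt h d (x 0)) (j : Fin 3) :
    pd j (fun y => h (y 0)) x = (Pi.single j (1:ℝ) : Fin 3 → ℝ) 0 * d := by
  have hproj := (ContinuousLinearMap.proj (R := ℝ) (φ := fun _ : Fin 3 => ℝ) 0).hasFDerivAt (x := x)
  have hc : HasFDerivAt (fun y : Fin 3 → ℝ => h (y 0))
      ((ContinuousLinearMap.smulRight (1 : ℝ →L[ℝ] ℝ) d).comp
        (ContinuousLinearMap.proj (R := ℝ) (φ := fun _ : Fin 3 => ℝ) 0)) x :=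
    hd.hasFDerivAt.comp x hproj
  rw [pd, hc.fderiv]
  simp [mul_comm]

lemma inner_hasDeriv (ξ c : ℝ) (s : ℝ) :
    HasDerivAt (fun s : ℝ => ξ * (s - c)) ξ s := by
  simpa using ((hasDerivAt_id s).sub_const c).const_mul ξ

lemma pd_cos (ξ c : ℝ) (j : Fin 3) (x : Fin 3 → ℝ) :
    pd j (fun y => Real.cos (ξ * (y 0 - c))) x
      = (Pi.single j (1:ℝ) : Fin 3 → ℝ) 0 * (-Real.sin (ξ * (x 0 - c)) * ξ) :=
  pd_comp01 _ _ x ((inner_hasDeriv ξ c (x 0)).cos) j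

lemma pd_sin (ξ c : ℝ) (j : Fin 3) (x : Fin 3 → ℝ) :
    pd j (fun y => Real.sin (ξ * (y 0 - c))) x
      = (Pi.single j (1:ℝ) : Fin 3 → ℝ) 0 * (Real.cos (ξ * (x 0 - c)) * ξ) :=
  pd_comp01 _ _ x ((inner_hasDeriv ξ c (x 0)).sin) j

lemma pd_neg_sin (ξ c : ℝ) (j : Fin 3) (x : Fin 3 → ℝ) :
    pd j (fun y => -Real.sin (ξ * (y 0 - c))) x
      = (Pi.single j (1:ℝ) : Fin 3 → ℝ) 0 * (-(Real.cos (ξ * (x 0 - c)) * ξ)) :=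
  pd_comp01 _ _ x ((inner_hasDeriv ξ c (x 0)).sin).neg j

lemma time_hasDeriv (ξ lam a : ℝ) (t : ℝ) :
    HasDerivAt (fun s : ℝ => ξ * (a - lam * s)) (-(ξ * lam)) t := by
  have h1 : HasDerivAt (fun s : ℝ => lam * s) lam t := by
    simpa using (hasDerivAt_id t).const_mul lam
  simpa [mul_comm] using (h1.const_sub a).const_mul ξ

lemma deriv_cos_lin (ξ lam a t : ℝ) :
    deriv (fun s => Real.cos (ξ * (a - lam * s))) t
      = Real.sin (ξ * (a - lam * t)) * (ξ * lam) := by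
  rw [((time_hasDeriv ξ lam a t).cos).deriv]; ring

lemma deriv_sin_lin (ξ lam a t : ℝ) :
    deriv (fun s => Real.sin (ξ * (a - lam * s))) t
      = -(Real.cos (ξ * (a - lam * t)) * (ξ * lam)) := by
  rw [((time_hasDeriv ξ lam a t).sin).deriv]; ring

lemma deriv_neg_sin_lin (ξ lam a t : ℝ) :
    deriv (fun s => -Real.sin (ξ * (a - lam * s))) t
      = Real.cos (ξ * (a - lam * t)) * (ξ * lam) := by
  rw [show (fun s => -Real.sin (ξ * (a - lam * s))) = -(fun s => Real.sin (ξ * (a - lam * s))) from rfl,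
    ((time_hasDeriv ξ lam a t).sin).neg.deriv]; ring

lemma divg_col (ξ lam : ℝ) (k : Fin 3) (t : ℝ) (x : Fin 3 → ℝ) :
    divg (col (fun t x => Mmat (ξ * (x 0 - lam * t))) k) t x = 0 := by
  fin_cases k <;>
    simp [divg, _root_.col, Mmat, Matrix.vecHead, Matrix.vecTail, Fin.sum_univ_three,
      pd_cos, pd_sin, pd_neg_sin, pd_const, Pi.single_apply]

lemma deltaS_eq (ξ lam : ℝ) (t : ℝ) (x : Fin 3 → ℝ) :
    deltaS (fun t x => Mmat (ξ * (x 0 - lam * t))) t x = ξ := by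
  have h := Real.sin_sq_add_cos_sq (ξ * (x 0 - lam * t))
  simp [deltaS, dirD, _root_.col, Mmat, Matrix.vecHead, Matrix.vecTail, Fin.sum_univ_three,
    pd_cos, pd_sin, pd_neg_sin, pd_const, Pi.single_apply]
  linear_combination ξ * h

lemma wvec_eq (c₃ c₄ ξ lam ρ₀ : ℝ) (t : ℝ) (x : Fin 3 → ℝ) :
    wvec c₃ c₄ (fun _ _ => ρ₀) (fun t x => Mmat (ξ * (x 0 - lam * t))) t x
      = ![c₄ * ξ, 0, 0] := by
  funext i
  fin_cases i <;>
    (simp only [wvec, rvec, divg_col, deltaS_eq]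
     simp [crossVec, _root_.col, Mmat, Matrix.vecHead, Matrix.vecTail, pd_const])

theorem helical_wave_solves_SOHB (c₁ c₂ c₃ c₄ ξ lam ρ₀ : ℝ)
    (hρ₀ : 0 < ρ₀) (hlam : lam = c₂ + c₄) :
    SolvesSOHB c₁ c₂ c₃ c₄ (fun _ _ => ρ₀)
      (fun t x =>
        rodrigues (ξ * (x 0 - lam * t)) ![1, 0, 0]) := by
  subst hlam
  have hA : (fun (t : ℝ) (x : Fin 3 → ℝ) =>
        rodrigues (ξ * (x 0 - (c₂ + c₄) * t)) ![1, 0, 0])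
      = fun t x => Mmat (ξ * (x 0 - (c₂ + c₄) * t)) := by
    funext t x; exact rod_eq _
  rw [hA]
  constructor
  · intro t x
    simp [Mmat, Fin.sum_univ_three, pd_const]
  · intro t x i j
    rw [wvec_eq]
    fin_cases i <;> fin_cases j <;>
      (simp [crossMat, Mmat, Matrix.mul_apply, Fin.sum_univ_three, pd_cos, pd_sin,
        pd_neg_sin, pd_const, deriv_cos_lin, deriv_sin_lin, deriv_neg_sin_lin,
        Pi.single_apply, Matrix.vecHead, Matrix.vecTail]
       try ring_nf)
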